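/- Let r, s, n be positive integers with s < r < n, and define the n×n matrix X = X^{(r,s,n)} = [x_ij] by: x_ij = 1/r if i ≤ r and j ≤ s; x_ij = (r−s)/(r(n−s)) if i ≤ r and s < j ≤ n; x_ij = 0 if r < i ≤ n and j ≤ s; and x_ij = 1/(n−s) if r < i ≤ n and s < j ≤ n. Then X^{(r,s,n)} is an RCDS doubly stochastic matrix: it is doubly stochastic and all diagonal sums ∑_i x_{i,σ(i)} over permutations σ with x_{i,σ(i)} > 0 for all i are equal. -/

import Mathlib

/-- `X` is doubly stochastic. -/
def DoublyStochastic {n : ℕ} (X : Matrix (Fin n) (Fin n) ℝ) : Prop :=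
  (∀ i j, 0 ≤ X i j) ∧ (∀ i, ∑ j, X i j = 1) ∧ (∀ j, ∑ i, X i j = 1)

/-- `X` has restricted constant diagonal sums. -/
def RCDS {n : ℕ} (X : Matrix (Fin n) (Fin n) ℝ) : Prop :=
  ∀ σ τ : Equiv.Perm (Fin n), (∀ i, 0 < X i (σ i)) → (∀ i, 0 < X i (τ i)) →
    ∑ i, X i (σ i) = ∑ i, X i (τ i)

lemma card_filter_lt_fin (n k : ℕ) (hk : k ≤ n) :
    (Finset.univ.filter (fun i : Fin n => (i : ℕ) < k)).card = k := by
  have : (Finset.univ.filter (fun i : Fin n => (i : ℕ) < k)) =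
      (Finset.univ : Finset (Fin k)).map (Fin.castLEEmb hk) := by
    ext i
    simp only [Finset.mem_filter, Finset.mem_univ, true_and, Finset.mem_map]
    constructor
    · intro h; exact ⟨⟨i, h⟩, by simp [Fin.castLEEmb, Fin.ext_iff]⟩
    · rintro ⟨j, _, rfl⟩; simpa using j.2
  simp [this]

lemma card_filter_not_lt_fin (n k : ℕ) (hk : k ≤ n) :
    (Finset.univ.filter (fun i : Fin n => ¬ (i : ℕ) < k)).card = n - k := by
  have h := Finset.card_filter_add_card_filter_not
    (s := (Finset.univ : Finset (Fin n))) (p := fun j : Fin n => (j : ℕ) < k)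
  rw [card_filter_lt_fin n k hk, Finset.card_univ, Fintype.card_fin] at h
  omega

lemma card_filter_perm (n s : ℕ) (σ : Equiv.Perm (Fin n)) :
    (Finset.univ.filter (fun i : Fin n => ((σ i : Fin n) : ℕ) < s)).card =
    (Finset.univ.filter (fun j : Fin n => (j : ℕ) < s)).card := by
  apply Finset.card_nbij' σ σ.symm <;> intro a ha <;> simp_all

lemma sum_ite_lt (n k : ℕ) (hk : k ≤ n) (a b : ℝ) :
    ∑ j : Fin n, (if (j : ℕ) < k then a else b) = k * a + (n - k : ℕ) * b := by
  rw [Finset.sum_ite, Finset.sum_const, Finset.sum_const, card_filter_lt_fin n k hk,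
    card_filter_not_lt_fin n k hk]
  simp [mul_comm]

lemma diag_sum_const (r s n : ℕ) (hsr : s < r) (hrn : r < n)
    (X : Matrix (Fin n) (Fin n) ℝ)
    (hX : ∀ i j : Fin n, X i j =
      if (i : ℕ) < r then
        (if (j : ℕ) < s then 1 / (r : ℝ)
         else ((r : ℝ) - (s : ℝ)) / ((r : ℝ) * ((n : ℝ) - (s : ℝ))))
      else
        (if (j : ℕ) < s then 0 else 1 / ((n : ℝ) - (s : ℝ))))
    (σ : Equiv.Perm (Fin n)) (hσ : ∀ i, 0 < X i (σ i)) :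
    ∑ i, X i (σ i) = s * (1 / (r : ℝ)) +
      (r - s : ℕ) * (((r : ℝ) - (s : ℝ)) / ((r : ℝ) * ((n : ℝ) - (s : ℝ)))) +
      (n - r : ℕ) * (1 / ((n : ℝ) - (s : ℝ))) := by
  set A : ℝ := ((r : ℝ) - (s : ℝ)) / ((r : ℝ) * ((n : ℝ) - (s : ℝ))) with hA
  set B : ℝ := 1 / ((n : ℝ) - (s : ℝ)) with hB
  -- positivity forces: i ≥ r → σ i ≥ s
  have key : ∀ i : Fin n, ((σ i : Fin n) : ℕ) < s → (i : ℕ) < r := by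
    intro i hi
    by_contra h
    have := hσ i
    rw [hX] at this
    simp [h, hi] at this
  have h1 : ∑ i, X i (σ i) =
      ∑ i : Fin n, (if (i : ℕ) < r then (if ((σ i : Fin n) : ℕ) < s then 1 / (r : ℝ) else A)
        else B) := by
    apply Finset.sum_congr rfl
    intro i _
    rw [hX]
    by_cases h : (i : ℕ) < r
    · simp [h]
    · have : ¬ ((σ i : Fin n) : ℕ) < s := fun hc => h (key i hc)
      simp [h, this]
  rw [h1, Finset.sum_ite, Finset.sum_const, card_filter_not_lt_fin n r hrn.le]
  have hfsub : (Finset.univ.filter (fun i : Fin n => (i : ℕ) < r)).filter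
      (fun i => ((σ i : Fin n) : ℕ) < s) =
      Finset.univ.filter (fun i : Fin n => ((σ i : Fin n) : ℕ) < s) := by
    ext i
    simp only [Finset.mem_filter, Finset.mem_univ, true_and]
    exact ⟨fun h => h.2, fun h => ⟨key i h, h⟩⟩
  rw [Finset.sum_ite, Finset.sum_const, Finset.sum_const, hfsub, card_filter_perm,
    card_filter_lt_fin n s (by omega)]
  have hcard2 : ((Finset.univ.filter (fun i : Fin n => (i : ℕ) < r)).filter
      (fun i => ¬ ((σ i : Fin n) : ℕ) < s)).card = r - s := by
    have h := Finset.card_filter_add_card_filter_not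
      (s := Finset.univ.filter (fun i : Fin n => (i : ℕ) < r))
      (p := fun i : Fin n => ((σ i : Fin n) : ℕ) < s)
    rw [hfsub, card_filter_perm, card_filter_lt_fin n s (by omega),
      card_filter_lt_fin n r hrn.le] at h
    omega
  rw [hcard2]
  simp [mul_comm]

/-- For positive integers `s < r < n`, the matrix `X^{(r,s,n)}` (with rows and
columns of `Fin n` thought of as `1,…,n`, so `i ≤ r` reads `(i : ℕ) < r`)
defined by `x_ij = 1/r` if `i ≤ r, j ≤ s`; `(r-s)/(r(n-s))` if `i ≤ r, s < j`;
`0` if `r < i, j ≤ s`; and `1/(n-s)` if `r < i, s < j`, is an RCDS doubly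
stochastic matrix. -/
theorem rcds_zero_block (r s n : ℕ) (hs : 0 < s) (hsr : s < r) (hrn : r < n)
    (X : Matrix (Fin n) (Fin n) ℝ)
    (hX : ∀ i j : Fin n, X i j =
      if (i : ℕ) < r then
        (if (j : ℕ) < s then 1 / (r : ℝ)
         else ((r : ℝ) - (s : ℝ)) / ((r : ℝ) * ((n : ℝ) - (s : ℝ))))
      else
        (if (j : ℕ) < s then 0 else 1 / ((n : ℝ) - (s : ℝ)))) :
    DoublyStochastic X ∧ RCDS X := by
  have hr0 : (0 : ℝ) < (r : ℝ) := by exact_mod_cast (by omega : 0 < r)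
  have hns : (0 : ℝ) < (n : ℝ) - (s : ℝ) := by
    have : (s : ℝ) < (n : ℝ) := by exact_mod_cast (by omega : s < n)
    linarith
  have hrs : (0 : ℝ) ≤ (r : ℝ) - (s : ℝ) := by
    have : (s : ℝ) ≤ (r : ℝ) := by exact_mod_cast hsr.le
    linarith
  constructor
  · refine ⟨?_, ?_, ?_⟩
    · intro i j
      rw [hX]
      split_ifs <;> positivity
    · intro i
      rw [Finset.sum_congr rfl (fun j _ => hX i j)]
      by_cases h : (i : ℕ) < r
      · simp only [h, if_true]
        rw [sum_ite_lt n s (by omega)]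
        have : ((n - s : ℕ) : ℝ) = (n : ℝ) - (s : ℝ) := by push_cast [Nat.cast_sub (by omega : s ≤ n)]; ring
        rw [this]
        field_simp
        ring
      · simp only [h, if_false]
        rw [sum_ite_lt n s (by omega)]
        have : ((n - s : ℕ) : ℝ) = (n : ℝ) - (s : ℝ) := by push_cast [Nat.cast_sub (by omega : s ≤ n)]; ring
        rw [this]
        field_simp
        ring
    · intro j
      rw [Finset.sum_congr rfl (fun i _ => hX i j)]
      by_cases h : (j : ℕ) < s
      · simp only [h, if_true]
        rw [sum_ite_lt n r (by omega)]
        field_simp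
        ring
      · simp only [h, if_false]
        rw [sum_ite_lt n r (by omega)]
        have : ((n - r : ℕ) : ℝ) = (n : ℝ) - (r : ℝ) := by push_cast [Nat.cast_sub (by omega : r ≤ n)]; ring
        rw [this]
        field_simp
        ring
  · intro σ τ hσ hτ
    rw [diag_sum_const r s n hsr hrn X hX σ hσ, diag_sum_const r s n hsr hrn X hX τ hτ]
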